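/- For positive definite matrices A, B, real p with 1 ≤ p ≤ 2, and t ∈ [0,1], the weighted p-power mean μ_p(A,B,t) = (t·A^p + (1-t)·B^p)^(1/p) satisfies trace((A - μ_p(A,B,t))²) ≤ trace((A - B)²). -/

import Mathlib

open Matrix MeasureTheory
open scoped ComplexOrder

/-- Apply a real function to a Hermitian matrix via the spectral decomposition. -/
noncomputable def matFun {n : ℕ} (A : Matrix (Fin n) (Fin n) ℂ) (hA : A.IsHermitian)
    (g : ℝ → ℝ) : Matrix (Fin n) (Fin n) ℂ :=
  (hA.eigenvectorUnitary : Matrix (Fin n) (Fin n) ℂ) *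
    Matrix.diagonal (fun i => (g (hA.eigenvalues i) : ℂ)) *
    star (hA.eigenvectorUnitary : Matrix (Fin n) (Fin n) ℂ)

/-- Real power of a Hermitian matrix via the spectral decomposition. -/
noncomputable def mpow {n : ℕ} (A : Matrix (Fin n) (Fin n) ℂ) (hA : A.IsHermitian)
    (p : ℝ) : Matrix (Fin n) (Fin n) ℂ :=
  matFun A hA (fun x => x ^ p)

/-- Hilbert-Schmidt (Frobenius) norm of a matrix. -/
noncomputable def frob {n : ℕ} (X : Matrix (Fin n) (Fin n) ℂ) : ℝ :=
  Real.sqrt (Matrix.trace (star X * X)).re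

namespace MF
variable {n : ℕ}
variable {A : Matrix (Fin n) (Fin n) ℂ} (hA : A.IsHermitian)

lemma star_mul_self_U : star (hA.eigenvectorUnitary : Matrix (Fin n) (Fin n) ℂ) *
    (hA.eigenvectorUnitary : Matrix (Fin n) (Fin n) ℂ) = 1 :=
  Unitary.coe_star_mul_self hA.eigenvectorUnitary

lemma mul_self_star_U : (hA.eigenvectorUnitary : Matrix (Fin n) (Fin n) ℂ) *
    star (hA.eigenvectorUnitary : Matrix (Fin n) (Fin n) ℂ) = 1 :=
  Unitary.coe_mul_star_self hA.eigenvectorUnitary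

lemma matFun_congr {g h : ℝ → ℝ} (hgh : ∀ i, g (hA.eigenvalues i) = h (hA.eigenvalues i)) :
    matFun A hA g = matFun A hA h := by
  have : (fun i => (g (hA.eigenvalues i) : ℂ)) = fun i => (h (hA.eigenvalues i) : ℂ) := by
    funext i; rw [hgh]
  unfold matFun
  rw [this]

lemma matFun_mul (g h : ℝ → ℝ) :
    matFun A hA g * matFun A hA h = matFun A hA (fun x => g x * h x) := by
  unfold matFun
  set U := (hA.eigenvectorUnitary : Matrix (Fin n) (Fin n) ℂ)
  calc U * Matrix.diagonal (fun i => (g (hA.eigenvalues i) : ℂ)) * star U *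
        (U * Matrix.diagonal (fun i => (h (hA.eigenvalues i) : ℂ)) * star U)
      = U * (Matrix.diagonal (fun i => (g (hA.eigenvalues i) : ℂ)) * ((star U * U) *
          Matrix.diagonal (fun i => (h (hA.eigenvalues i) : ℂ)))) * star U := by
        simp only [Matrix.mul_assoc]
    _ = U * Matrix.diagonal (fun i => ((g (hA.eigenvalues i) * h (hA.eigenvalues i) : ℝ) : ℂ)) * star U := by
        rw [star_mul_self_U, Matrix.one_mul, Matrix.diagonal_mul_diagonal]
        simp only [Matrix.mul_assoc]
        norm_cast

lemma matFun_one : matFun A hA (fun _ => 1) = 1 := by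
  unfold matFun
  simp [mul_self_star_U hA]

lemma matFun_id : matFun A hA (fun x => x) = A := by
  unfold matFun
  conv_rhs => rw [hA.spectral_theorem]
  rfl

lemma matFun_smul_add (c d : ℝ) (g h : ℝ → ℝ) :
    matFun A hA (fun x => c * g x + d * h x) =
      c • matFun A hA g + d • matFun A hA h := by
  unfold matFun
  set U := (hA.eigenvectorUnitary : Matrix (Fin n) (Fin n) ℂ)
  have : Matrix.diagonal (fun i => ((c * g (hA.eigenvalues i) + d * h (hA.eigenvalues i) : ℝ) : ℂ)) =
      c • Matrix.diagonal (fun i => (g (hA.eigenvalues i) : ℂ)) +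
      d • Matrix.diagonal (fun i => (h (hA.eigenvalues i) : ℂ)) := by
    ext i j
    by_cases hij : i = j <;>
      simp [Matrix.diagonal_apply, hij, Complex.real_smul] <;> push_cast <;> ring
  rw [this, Matrix.mul_add, Matrix.add_mul]
  congr 1 <;> simp [Matrix.mul_smul, Matrix.smul_mul]

lemma matFun_isHermitian (g : ℝ → ℝ) : (matFun A hA g).IsHermitian := by
  unfold matFun
  set U := (hA.eigenvectorUnitary : Matrix (Fin n) (Fin n) ℂ)
  unfold Matrix.IsHermitian
  rw [Matrix.conjTranspose_mul, Matrix.conjTranspose_mul, Matrix.star_eq_conjTranspose,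
    Matrix.conjTranspose_conjTranspose, Matrix.diagonal_conjTranspose]
  have : star (fun i => (g (hA.eigenvalues i) : ℂ)) = fun i => (g (hA.eigenvalues i) : ℂ) := by
    funext i; simp [Pi.star_apply, Complex.conj_ofReal]
  rw [this, Matrix.mul_assoc]

lemma trace_matFun (g : ℝ → ℝ) :
    Matrix.trace (matFun A hA g) = ∑ i, (g (hA.eigenvalues i) : ℂ) := by
  unfold matFun
  rw [Matrix.trace_mul_cycle, star_mul_self_U, Matrix.one_mul,
    Matrix.trace_diagonal]



lemma conj_pow (V N : Matrix (Fin n) (Fin n) ℂ) (hV : V * star V = 1) (k : ℕ) :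
    (V * N * star V) ^ k = V * N ^ k * star V := by
  induction k with
  | zero => simp [hV]
  | succ k ih =>
      rw [pow_succ, pow_succ, ih]
      calc V * N ^ k * star V * (V * N * star V)
          = V * N ^ k * (star V * V) * N * star V := by simp only [Matrix.mul_assoc]
        _ = V * (N ^ k * N) * star V := by
            have h2 : star V * V = 1 := by
              have := mul_eq_one_comm.mp hV
              exact this
            rw [h2]
            simp only [Matrix.mul_one, Matrix.mul_assoc]

lemma aeval_conj (V N : Matrix (Fin n) (Fin n) ℂ) (hV : V * star V = 1)
    (q : Polynomial ℝ) :
    Polynomial.aeval (V * N * star V) q = V * Polynomial.aeval N q * star V := by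
  induction q using Polynomial.induction_on' with
  | add p q hp hq =>
      rw [map_add, map_add, hp, hq, Matrix.mul_add, Matrix.add_mul]
  | monomial k a =>
      rw [Polynomial.aeval_monomial, Polynomial.aeval_monomial, conj_pow V N hV]
      calc algebraMap ℝ (Matrix (Fin n) (Fin n) ℂ) a * (V * N ^ k * star V)
          = a • (V * N ^ k * star V) := by rw [Algebra.algebraMap_eq_smul_one, smul_mul_assoc, one_mul]
        _ = V * (a • N ^ k) * star V := by rw [Matrix.mul_smul, Matrix.smul_mul]
        _ = V * (algebraMap ℝ _ a * N ^ k) * star V := by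
            rw [Algebra.algebraMap_eq_smul_one, smul_mul_assoc, one_mul]

lemma aeval_diagonal (c : Fin n → ℂ) (q : Polynomial ℝ) :
    Polynomial.aeval (Matrix.diagonal c) q =
      Matrix.diagonal (fun i => Polynomial.aeval (c i) q) := by
  induction q using Polynomial.induction_on' with
  | add p q hp hq =>
      have : (fun i => Polynomial.aeval (c i) (p + q)) =
          fun i => Polynomial.aeval (c i) p + Polynomial.aeval (c i) q := by
        funext i; rw [map_add]
      rw [map_add, hp, hq, this, Matrix.diagonal_add]
  | monomial k a =>
      rw [Polynomial.aeval_monomial]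
      have : (Matrix.diagonal c) ^ k = Matrix.diagonal (fun i => c i ^ k) := by
        rw [Matrix.diagonal_pow]
        rfl
      rw [this]
      rw [Algebra.algebraMap_eq_smul_one, smul_mul_assoc, one_mul]
      have : (fun i => Polynomial.aeval (c i) (Polynomial.monomial k a)) =
          fun i => a • c i ^ k := by
        funext i
        rw [Polynomial.aeval_monomial, Algebra.algebraMap_eq_smul_one, smul_mul_assoc, one_mul]
      rw [this]
      ext i j
      by_cases hij : i = j <;> simp [Matrix.diagonal_apply, hij]

lemma decomp_eq_aeval (N : Matrix (Fin n) (Fin n) ℂ) (V : Matrix (Fin n) (Fin n) ℂ)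
    (hV : V * star V = 1) (d : Fin n → ℝ)
    (hdec : N = V * Matrix.diagonal (fun i => (d i : ℂ)) * star V)
    (q : Polynomial ℝ) :
    V * Matrix.diagonal (fun i => ((Polynomial.eval (d i) q : ℝ) : ℂ)) * star V
      = Polynomial.aeval N q := by
  have key : ∀ x : ℝ, Polynomial.aeval ((x : ℂ)) q = ((Polynomial.eval x q : ℝ) : ℂ) := by
    intro x
    rw [show ((x : ℂ)) = algebraMap ℝ ℂ x from rfl, Polynomial.aeval_algebraMap_apply]
    simp only [Polynomial.coe_aeval_eq_eval]; rfl
  rw [hdec, aeval_conj _ _ hV, aeval_diagonal]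
  have : (fun i => ((Polynomial.eval (d i) q : ℝ) : ℂ)) =
      fun i => Polynomial.aeval ((d i : ℂ)) q := by
    funext i; rw [key]
  rw [this]

/-- Well-definedness: matFun can be computed from any unitary diagonalization. -/
lemma matFun_eq_of_decomp {A : Matrix (Fin n) (Fin n) ℂ} (hA : A.IsHermitian)
    (V : Matrix (Fin n) (Fin n) ℂ) (hV : V * star V = 1) (d : Fin n → ℝ)
    (hdec : A = V * Matrix.diagonal (fun i => (d i : ℂ)) * star V) (g : ℝ → ℝ) :
    matFun A hA g = V * Matrix.diagonal (fun i => (g (d i) : ℂ)) * star V := by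
  classical
  set S : Finset ℝ := Finset.image d Finset.univ ∪ Finset.image hA.eigenvalues Finset.univ with hS
  set q : Polynomial ℝ := Lagrange.interpolate S id g with hq
  have hnode : ∀ x ∈ S, Polynomial.eval x q = g x := fun x hx =>
    Lagrange.eval_interpolate_at_node g (Set.injOn_id _) hx
  have hd : ∀ i, d i ∈ S := fun i => Finset.mem_union_left _ (Finset.mem_image_of_mem d (Finset.mem_univ i))
  have he : ∀ i, hA.eigenvalues i ∈ S := fun i => Finset.mem_union_right _ (Finset.mem_image_of_mem _ (Finset.mem_univ i))
  have h1 : matFun A hA g = Polynomial.aeval A q := by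
    unfold matFun
    have := decomp_eq_aeval A (hA.eigenvectorUnitary : Matrix (Fin n) (Fin n) ℂ)
      (mul_self_star_U hA) hA.eigenvalues (by exact hA.spectral_theorem) q
    rw [← this]
    have h3 : (fun i => ((g (hA.eigenvalues i) : ℝ) : ℂ)) =
        fun i => ((Polynomial.eval (hA.eigenvalues i) q : ℝ) : ℂ) := by
      funext i; rw [hnode _ (he i)]
    rw [h3]
  have h2 := decomp_eq_aeval A V hV d hdec q
  have h4 : (fun i => ((g (d i) : ℝ) : ℂ)) =
      fun i => ((Polynomial.eval (d i) q : ℝ) : ℂ) := by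
    funext i; rw [hnode _ (hd i)]
  rw [h1, ← h2, h4]

/-- Functional calculus composes. -/
lemma matFun_matFun {A : Matrix (Fin n) (Fin n) ℂ} (hA : A.IsHermitian) (g h : ℝ → ℝ)
    (hN : (matFun A hA g).IsHermitian) :
    matFun (matFun A hA g) hN h = matFun A hA (fun x => h (g x)) := by
  exact matFun_eq_of_decomp hN (hA.eigenvectorUnitary : Matrix (Fin n) (Fin n) ℂ)
    (mul_self_star_U hA) (fun i => g (hA.eigenvalues i)) rfl h


/-- real quadratic form -/
noncomputable def Qr (N : Matrix (Fin n) (Fin n) ℂ) (v : Fin n → ℂ) : ℝ :=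
  (dotProduct (star v) (N.mulVec v)).re

/-- coordinates of `v` in the eigenbasis of `A` -/
noncomputable def wvec {A : Matrix (Fin n) (Fin n) ℂ} (hA : A.IsHermitian) (v : Fin n → ℂ) :
    Fin n → ℂ :=
  (star (hA.eigenvectorUnitary : Matrix (Fin n) (Fin n) ℂ)).mulVec v

lemma dot_matFun {A : Matrix (Fin n) (Fin n) ℂ} (hA : A.IsHermitian) (g : ℝ → ℝ)
    (v : Fin n → ℂ) :
    dotProduct (star v) ((matFun A hA g).mulVec v) =
      ((∑ i, g (hA.eigenvalues i) * Complex.normSq (wvec hA v i) : ℝ) : ℂ) := by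
  set U := (hA.eigenvectorUnitary : Matrix (Fin n) (Fin n) ℂ) with hU
  set w := wvec hA v with hw
  have h1 : (matFun A hA g).mulVec v =
      U.mulVec ((Matrix.diagonal (fun i => (g (hA.eigenvalues i) : ℂ))).mulVec w) := by
    unfold matFun
    rw [← Matrix.mulVec_mulVec, ← Matrix.mulVec_mulVec]
    rfl
  have h2 : star v ᵥ* U = star w := by
    rw [hw]; unfold wvec
    rw [Matrix.star_mulVec, Matrix.star_eq_conjTranspose, Matrix.conjTranspose_conjTranspose]
  rw [h1, Matrix.dotProduct_mulVec, h2]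
  have h3 : ∀ i, ((Matrix.diagonal (fun i => (g (hA.eigenvalues i) : ℂ))).mulVec w) i =
      (g (hA.eigenvalues i) : ℂ) * w i := by
    intro i
    rw [Matrix.mulVec_diagonal]
  unfold dotProduct
  push_cast
  congr 1
  funext i
  rw [h3, Pi.star_apply, Complex.star_def]
  rw [show (starRingEnd ℂ) (w i) * ((g (hA.eigenvalues i) : ℂ) * w i)
      = (g (hA.eigenvalues i) : ℂ) * ((starRingEnd ℂ) (w i) * w i) by ring]
  rw [← Complex.normSq_eq_conj_mul_self]

lemma Qr_matFun {A : Matrix (Fin n) (Fin n) ℂ} (hA : A.IsHermitian) (g : ℝ → ℝ)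
    (v : Fin n → ℂ) :
    Qr (matFun A hA g) v = ∑ i, g (hA.eigenvalues i) * Complex.normSq (wvec hA v i) := by
  unfold Qr
  rw [dot_matFun, Complex.ofReal_re]

lemma wvec_normSq_sum {A : Matrix (Fin n) (Fin n) ℂ} (hA : A.IsHermitian) (v : Fin n → ℂ) :
    ∑ i, Complex.normSq (wvec hA v i) = ∑ i, Complex.normSq (v i) := by
  have := Qr_matFun hA (fun _ => 1) v
  rw [matFun_one] at this
  unfold Qr at this
  simp only [one_mul] at this
  rw [← this]
  have : dotProduct (star v) ((1 : Matrix (Fin n) (Fin n) ℂ).mulVec v)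
      = ((∑ i, Complex.normSq (v i) : ℝ) : ℂ) := by
    rw [Matrix.one_mulVec]
    unfold dotProduct
    push_cast
    congr 1
    funext i
    rw [Pi.star_apply, Complex.star_def, Complex.normSq_eq_conj_mul_self]
  rw [this, Complex.ofReal_re]



lemma dot_self_hermitian {H : Matrix (Fin n) (Fin n) ℂ} (hH : H.IsHermitian) (v : Fin n → ℂ) :
    dotProduct (star v) (H.mulVec v) = ((Qr H v : ℝ) : ℂ) := by
  set z := dotProduct (star v) (H.mulVec v) with hz
  have hself : (starRingEnd ℂ) z = z := by
    rw [hz]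
    have h1 : star (dotProduct (star v) (H.mulVec v))
        = dotProduct (star (H.mulVec v)) v := by
      rw [← Matrix.star_dotProduct_star, star_star]
    rw [show ((starRingEnd ℂ) (dotProduct (star v) (H.mulVec v)))
        = star (dotProduct (star v) (H.mulVec v)) from rfl, h1,
      Matrix.star_mulVec, Matrix.dotProduct_mulVec, hH]
  exact (Complex.conj_eq_iff_re.mp hself).symm

lemma Qr_comb (C D : Matrix (Fin n) (Fin n) ℂ) (a b : ℝ) (v : Fin n → ℂ) :
    Qr (a • C + b • D) v = a * Qr C v + b * Qr D v := by
  unfold Qr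
  rw [Matrix.add_mulVec, Matrix.smul_mulVec, Matrix.smul_mulVec,
    dotProduct_add, dotProduct_smul, dotProduct_smul]
  simp [Complex.real_smul, Complex.add_re, Complex.mul_re]

lemma Qr_nonneg_of_posSemidef {C : Matrix (Fin n) (Fin n) ℂ} (hC : C.PosSemidef)
    (v : Fin n → ℂ) : 0 ≤ Qr C v :=
  hC.re_dotProduct_nonneg v

lemma posSemidef_of_Qr {W : Matrix (Fin n) (Fin n) ℂ} (hW : W.IsHermitian)
    (h : ∀ v, 0 ≤ Qr W v) : W.PosSemidef := by
  refine Matrix.PosSemidef.of_dotProduct_mulVec_nonneg hW (fun x => ?_)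
  rw [dot_self_hermitian hW]
  rw [Complex.zero_le_real]
  exact h x

lemma posSemidef_comb {C D : Matrix (Fin n) (Fin n) ℂ} (hC : C.PosSemidef) (hD : D.PosSemidef)
    {a b : ℝ} (ha : 0 ≤ a) (hb : 0 ≤ b) (hW : (a • C + b • D).IsHermitian) :
    (a • C + b • D).PosSemidef := by
  refine posSemidef_of_Qr hW (fun v => ?_)
  rw [Qr_comb]
  have := Qr_nonneg_of_posSemidef hC v
  have := Qr_nonneg_of_posSemidef hD v
  positivity

lemma matFun_posSemidef {A : Matrix (Fin n) (Fin n) ℂ} (hA : A.IsHermitian) (g : ℝ → ℝ)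
    (hg : ∀ i, 0 ≤ g (hA.eigenvalues i)) : (matFun A hA g).PosSemidef := by
  refine posSemidef_of_Qr (matFun_isHermitian hA g) (fun v => ?_)
  rw [Qr_matFun]
  exact Finset.sum_nonneg fun i _ => mul_nonneg (hg i) (Complex.normSq_nonneg _)

lemma matFun_affine {A : Matrix (Fin n) (Fin n) ℂ} (hA : A.IsHermitian) (s : ℝ) :
    matFun A hA (fun x => x + s) = A + s • 1 := by
  have h : (fun x : ℝ => x + s) = fun x => (1 : ℝ) * x + s * 1 := by funext x; ring
  rw [h, matFun_smul_add, matFun_id, matFun_one, one_smul]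

lemma matFun_resolvent_mul {A : Matrix (Fin n) (Fin n) ℂ} (hA : A.IsHermitian) (s : ℝ)
    (hs : ∀ i, hA.eigenvalues i + s ≠ 0) :
    (A + s • 1) * matFun A hA (fun x => (x + s)⁻¹) = 1 := by
  rw [← matFun_affine hA s, matFun_mul]
  rw [matFun_congr hA (h := fun _ => 1) (fun i => by
    exact mul_inv_cancel₀ (hs i))]
  exact matFun_one hA

/-- variational inequality : `2 Re⟨v,u⟩ - ⟨u,Pu⟩ ≤ ⟨v, P⁻¹ v⟩`. -/
lemma qr_inv_ge {P R : Matrix (Fin n) (Fin n) ℂ} (hP : P.IsHermitian)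
    (hpos : ∀ u, 0 ≤ Qr P u) (hPR : P * R = 1) (hR : R.IsHermitian) (u v : Fin n → ℂ) :
    2 * (dotProduct (star v) u).re - Qr P u ≤ Qr R v := by
  have hRP : R * P = 1 := mul_eq_one_comm.mp hPR
  have key : ∀ x : Fin n → ℂ, star (R.mulVec v) ⬝ᵥ x = star v ⬝ᵥ R.mulVec x := by
    intro x
    rw [Matrix.star_mulVec, hR, ← Matrix.dotProduct_mulVec]
  have h0 := hpos (u - R.mulVec v)
  unfold Qr at h0 ⊢
  have hexp : star (u - R.mulVec v) ⬝ᵥ P.mulVec (u - R.mulVec v)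
      = star u ⬝ᵥ P.mulVec u - star u ⬝ᵥ v - star v ⬝ᵥ u + star v ⬝ᵥ R.mulVec v := by
    have hPRv : P.mulVec (R.mulVec v) = v := by
      rw [Matrix.mulVec_mulVec, hPR, Matrix.one_mulVec]
    have hRPu : R.mulVec (P.mulVec u) = u := by
      rw [Matrix.mulVec_mulVec, hRP, Matrix.one_mulVec]
    rw [Matrix.mulVec_sub, hPRv, star_sub, sub_dotProduct,
      dotProduct_sub, dotProduct_sub, key, key, hRPu]
    ring
  rw [hexp] at h0
  have hconj : (star u ⬝ᵥ v).re = (star v ⬝ᵥ u).re := by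
    have : star u ⬝ᵥ v = star (star v ⬝ᵥ u) := by
      rw [← Matrix.star_dotProduct_star, star_star]
    rw [this]
    exact Complex.conj_re _
  simp only [Complex.add_re, Complex.sub_re] at h0
  rw [hconj] at h0
  linarith


open Set

/-- the normalization constant -/
noncomputable def Iconst (σ : ℝ) : ℝ := ∫ s in Ioi (0:ℝ), s ^ (σ-1) / (1+s)

variable {σ : ℝ}

lemma base_integrable (h0 : 0 < σ) (h1 : σ < 1) :
    IntegrableOn (fun s : ℝ => s ^ (σ-1) / (1+s)) (Ioi 0) := by
  have hmeas : Measurable (fun s : ℝ => s ^ (σ-1) / (1+s)) := by fun_prop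
  have hIoc : IntegrableOn (fun s : ℝ => s ^ (σ-1) / (1+s)) (Ioc 0 1) := by
    have hbig : IntegrableOn (fun s : ℝ => s ^ (σ-1)) (Ioc 0 1) := by
      rw [← intervalIntegrable_iff_integrableOn_Ioc_of_le (by norm_num : (0:ℝ) ≤ 1)]
      exact intervalIntegral.intervalIntegrable_rpow' (by linarith)
    refine Integrable.mono hbig (hmeas.aestronglyMeasurable.restrict) ?_
    refine (MeasureTheory.ae_restrict_iff' measurableSet_Ioc).mpr (.of_forall fun s hs => ?_)
    have hs0 : 0 < s := hs.1
    have hr : 0 ≤ s ^ (σ-1) := Real.rpow_nonneg hs0.le _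
    rw [Real.norm_eq_abs, Real.norm_eq_abs, abs_of_nonneg hr,
      abs_of_nonneg (by positivity : (0:ℝ) ≤ s ^ (σ-1) / (1+s))]
    rw [div_le_iff₀ (by linarith : (0:ℝ) < 1 + s)]
    nlinarith [hr]
  have hIoi : IntegrableOn (fun s : ℝ => s ^ (σ-1) / (1+s)) (Ioi 1) := by
    have hbig : IntegrableOn (fun s : ℝ => s ^ (σ-2)) (Ioi 1) :=
      integrableOn_Ioi_rpow_of_lt (by linarith) one_pos
    refine Integrable.mono hbig (hmeas.aestronglyMeasurable.restrict) ?_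
    refine (MeasureTheory.ae_restrict_iff' measurableSet_Ioi).mpr (.of_forall fun s hs => ?_)
    have hs1 : (1:ℝ) < s := hs
    have hs0 : (0:ℝ) < s := by linarith
    have hr : 0 ≤ s ^ (σ-1) := Real.rpow_nonneg hs0.le _
    rw [Real.norm_eq_abs, Real.norm_eq_abs, abs_of_nonneg (Real.rpow_nonneg hs0.le _),
      abs_of_nonneg (by positivity : (0:ℝ) ≤ s ^ (σ-1) / (1+s))]
    rw [div_le_iff₀ (by linarith : (0:ℝ) < 1 + s)]
    have : s ^ (σ-2) * (1+s) = s ^ (σ-2) + s ^ (σ-2) * s := by ring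
    rw [this]
    have h2 : s ^ (σ-2) * s = s ^ (σ-1) := by
      rw [mul_comm, ← Real.rpow_one_add' hs0.le (by intro hc; linarith)]
      congr 1; ring
    rw [h2]
    have : 0 ≤ s ^ (σ-2) := Real.rpow_nonneg hs0.le _
    linarith
  have : Ioi (0:ℝ) = Ioc 0 1 ∪ Ioi 1 := by
    rw [Set.Ioc_union_Ioi_eq_Ioi]
    norm_num
  rw [this]
  exact hIoc.union hIoi

lemma Iconst_pos (h0 : 0 < σ) (h1 : σ < 1) : 0 < Iconst σ := by
  unfold Iconst
  rw [setIntegral_pos_iff_support_of_nonneg_ae]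
  · have : (Function.support (fun s : ℝ => s ^ (σ-1) / (1+s)) ∩ Ioi 0) = Ioi 0 := by
      apply Set.inter_eq_self_of_subset_right
      intro s hs
      have hs0 : (0:ℝ) < s := hs
      have hpos : 0 < s ^ (σ-1) / (1+s) := by positivity
      exact ne_of_gt hpos
    rw [this]
    simp
  · refine (MeasureTheory.ae_restrict_iff' measurableSet_Ioi).mpr (.of_forall fun s hs => ?_)
    have hs0 : (0:ℝ) < s := hs
    positivity
  · exact base_integrable h0 h1

lemma lam_integrable (h0 : 0 < σ) (h1 : σ < 1) {lam : ℝ} (hl : 0 ≤ lam) :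
    IntegrableOn (fun s : ℝ => s ^ (σ-1) * (lam / (lam + s))) (Ioi 0) := by
  rcases eq_or_lt_of_le hl with h | h
  · have : (fun s : ℝ => s ^ (σ-1) * (lam / (lam + s))) =ᵐ[volume.restrict (Ioi 0)] 0 := by
      refine (MeasureTheory.ae_restrict_iff' measurableSet_Ioi).mpr (.of_forall fun s hs => ?_)
      rw [← h]
      simp
    exact (integrable_zero _ _ _).congr this.symm
  · rw [show (0:ℝ) = lam * 0 by ring] at h ⊢
    rw [← integrableOn_Ioi_comp_mul_left_iff (fun s : ℝ => s ^ (σ-1) * (lam / (lam + s))) 0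
      (by simpa using h)]
    simp only [mul_zero] at *
    have hl' : (0:ℝ) < lam := by simpa using h
    have : EqOn (fun u : ℝ => (lam*u) ^ (σ-1) * (lam / (lam + lam*u)))
        (fun u : ℝ => lam ^ (σ-1) * (u ^ (σ-1) / (1+u))) (Ioi 0) := by
      intro u hu
      have hu0 : (0:ℝ) < u := hu
      have e1 : (lam*u) ^ (σ-1) = lam ^ (σ-1) * u ^ (σ-1) :=
        Real.mul_rpow hl'.le hu0.le
      have e2 : lam + lam*u = lam * (1+u) := by ring
      simp only [e1, e2]
      rw [show lam / (lam*(1+u)) = 1/(1+u) by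
        rw [show lam / (lam*(1+u)) = lam * 1 / (lam*(1+u)) by ring]
        exact mul_div_mul_left 1 (1+u) hl'.ne']
      ring
    refine (IntegrableOn.congr_fun ?_ this.symm measurableSet_Ioi)
    exact ((base_integrable h0 h1).const_mul _)

lemma lam_integral (h0 : 0 < σ) (h1 : σ < 1) {lam : ℝ} (hl : 0 ≤ lam) :
    ∫ s in Ioi (0:ℝ), s ^ (σ-1) * (lam / (lam + s)) = lam ^ σ * Iconst σ := by
  rcases eq_or_lt_of_le hl with h | h
  · rw [← h]
    simp [Real.zero_rpow (ne_of_gt h0)]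
  · have key := integral_comp_mul_left_Ioi
      (fun s : ℝ => s ^ (σ-1) * (lam / (lam + s))) 0 h
    simp only [mul_zero] at key
    have : EqOn (fun u : ℝ => (lam*u) ^ (σ-1) * (lam / (lam + lam*u)))
        (fun u : ℝ => lam ^ (σ-1) * (u ^ (σ-1) / (1+u))) (Ioi 0) := by
      intro u hu
      have hu0 : (0:ℝ) < u := hu
      have e1 : (lam*u) ^ (σ-1) = lam ^ (σ-1) * u ^ (σ-1) :=
        Real.mul_rpow h.le hu0.le
      have e2 : lam + lam*u = lam * (1+u) := by ring
      simp only [e1, e2]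
      rw [show lam / (lam*(1+u)) = 1/(1+u) by
        rw [show lam / (lam*(1+u)) = lam * 1 / (lam*(1+u)) by ring]
        exact mul_div_mul_left 1 (1+u) h.ne']
      ring
    rw [setIntegral_congr_fun measurableSet_Ioi this] at key
    rw [MeasureTheory.integral_const_mul] at key
    have : ∫ s in Ioi (0:ℝ), s ^ (σ-1) * (lam / (lam + s))
        = lam * (lam ^ (σ-1) * ∫ u in Ioi (0:ℝ), u ^ (σ-1) / (1+u)) := by
      rw [key, smul_eq_mul, ← mul_assoc, mul_inv_cancel₀ h.ne', one_mul]
    rw [this]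
    unfold Iconst
    rw [← mul_assoc]
    congr 1
    rw [← Real.rpow_one_add' h.le (by intro hc; linarith : 1 + (σ-1) ≠ 0)]
    congr 1; ring


/-- resolvent quadratic-form convexity -/
lemma qr_resolvent_comb {C D : Matrix (Fin n) (Fin n) ℂ} (hC : C.PosSemidef)
    (hD : D.PosSemidef) {a : ℝ} (ha : 0 ≤ a) (ha1 : a ≤ 1) {s : ℝ} (hs : 0 < s)
    (hW : (a • C + (1-a) • D).IsHermitian) (v : Fin n → ℂ) :
    Qr (matFun (a • C + (1-a) • D) hW (fun x => (x+s)⁻¹)) v ≤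
      a * Qr (matFun C hC.1 (fun x => (x+s)⁻¹)) v
        + (1-a) * Qr (matFun D hD.1 (fun x => (x+s)⁻¹)) v := by
  set W := a • C + (1-a) • D with hWdef
  have hWpsd : W.PosSemidef := posSemidef_comb hC hD ha (by linarith) hW
  -- resolvents
  set RW := matFun W hW (fun x => (x+s)⁻¹) with hRW
  set RC := matFun C hC.1 (fun x => (x+s)⁻¹) with hRC
  set RD := matFun D hD.1 (fun x => (x+s)⁻¹) with hRD
  have hnzW : ∀ i, hW.eigenvalues i + s ≠ 0 :=
    fun i => by have := hWpsd.eigenvalues_nonneg i; positivity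
  have hnzC : ∀ i, hC.1.eigenvalues i + s ≠ 0 :=
    fun i => by have := hC.eigenvalues_nonneg i; positivity
  have hnzD : ∀ i, hD.1.eigenvalues i + s ≠ 0 :=
    fun i => by have := hD.eigenvalues_nonneg i; positivity
  have hmulW : (W + s • 1) * RW = 1 := matFun_resolvent_mul hW s hnzW
  have hmulC : (C + s • 1) * RC = 1 := matFun_resolvent_mul hC.1 s hnzC
  have hmulD : (D + s • 1) * RD = 1 := matFun_resolvent_mul hD.1 s hnzD
  -- positivity of shifted quadratic forms
  have hposP : ∀ (M : Matrix (Fin n) (Fin n) ℂ) (hM : M.IsHermitian), M.PosSemidef →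
      ∀ u, 0 ≤ Qr (M + s • 1) u := by
    intro M hM hMp u
    have : M + s • (1 : Matrix (Fin n) (Fin n) ℂ) = matFun M hM (fun x => x + s) := by
      rw [matFun_affine]
    rw [this, Qr_matFun]
    refine Finset.sum_nonneg fun i _ => mul_nonneg ?_ (Complex.normSq_nonneg _)
    have := hMp.eigenvalues_nonneg i
    positivity
  -- hermitian of shifted
  have hherm : ∀ (M : Matrix (Fin n) (Fin n) ℂ) (hM : M.IsHermitian),
      (M + s • 1).IsHermitian := by
    intro M hM
    rw [← matFun_affine hM]
    exact matFun_isHermitian hM _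
  set u₀ := RW.mulVec v with hu₀
  -- value at the optimum
  have hWRv : (W + s • 1).mulVec u₀ = v := by
    rw [hu₀, Matrix.mulVec_mulVec, hmulW, Matrix.one_mulVec]
  have hQRW : Qr RW v = 2 * (dotProduct (star v) u₀).re - Qr (W + s • 1) u₀ := by
    have h1 : Qr (W + s • 1) u₀ = (dotProduct (star u₀) v).re := by
      unfold Qr
      rw [hWRv]
    have h2 : (dotProduct (star u₀) v).re = (dotProduct (star v) u₀).re := by
      have : dotProduct (star u₀) v = star (dotProduct (star v) u₀) := by
        rw [← Matrix.star_dotProduct_star, star_star]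
      rw [this]
      exact Complex.conj_re _
    rw [h1, h2]
    have : Qr RW v = (dotProduct (star v) u₀).re := rfl
    rw [this]
    ring
  -- decompose shifted W
  have hsplit : W + s • (1 : Matrix (Fin n) (Fin n) ℂ)
      = a • (C + s • 1) + (1-a) • (D + s • 1) := by
    rw [hWdef]; module
  have hQsplit : Qr (W + s • 1) u₀ = a * Qr (C + s • 1) u₀ + (1-a) * Qr (D + s • 1) u₀ := by
    rw [hsplit, Qr_comb]
  -- variational bounds
  have hCbd : 2 * (dotProduct (star v) u₀).re - Qr (C + s • 1) u₀ ≤ Qr RC v :=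
    qr_inv_ge (hherm C hC.1) (hposP C hC.1 hC) hmulC (matFun_isHermitian _ _) u₀ v
  have hDbd : 2 * (dotProduct (star v) u₀).re - Qr (D + s • 1) u₀ ≤ Qr RD v :=
    qr_inv_ge (hherm D hD.1) (hposP D hD.1 hD) hmulD (matFun_isHermitian _ _) u₀ v
  have expand : Qr RW v = a * (2 * (dotProduct (star v) u₀).re - Qr (C + s • 1) u₀)
      + (1-a) * (2 * (dotProduct (star v) u₀).re - Qr (D + s • 1) u₀) := by
    rw [hQRW, hQsplit]; ring
  rw [expand]
  have h1 := mul_le_mul_of_nonneg_left hCbd ha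
  have h2 := mul_le_mul_of_nonneg_left hDbd (by linarith : (0:ℝ) ≤ 1 - a)
  linarith

/-- the integral representation of the power quadratic form -/
lemma qr_pow_rep {σ : ℝ} (hσ0 : 0 < σ) (hσ1 : σ < 1)
    {M : Matrix (Fin n) (Fin n) ℂ} (hM : M.IsHermitian) (hMp : M.PosSemidef) (v : Fin n → ℂ) :
    IntegrableOn (fun s : ℝ => s ^ (σ-1) * Qr (matFun M hM (fun x => x/(x+s))) v) (Ioi 0) ∧
    ∫ s in Ioi (0:ℝ), s ^ (σ-1) * Qr (matFun M hM (fun x => x/(x+s))) v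
      = Qr (matFun M hM (fun x => x ^ σ)) v * Iconst σ := by
  have hfun : (fun s : ℝ => s ^ (σ-1) * Qr (matFun M hM (fun x => x/(x+s))) v)
      = fun s : ℝ => ∑ i, Complex.normSq (wvec hM v i) *
          (s ^ (σ-1) * (hM.eigenvalues i / (hM.eigenvalues i + s))) := by
    funext s
    rw [Qr_matFun, Finset.mul_sum]
    congr 1
    funext i
    ring
  have hint : ∀ i : Fin n, Integrable (fun s : ℝ => Complex.normSq (wvec hM v i) *
      (s ^ (σ-1) * (hM.eigenvalues i / (hM.eigenvalues i + s))))
      (Measure.restrict volume (Ioi 0)) :=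
    fun i => (lam_integrable hσ0 hσ1 (hMp.eigenvalues_nonneg i)).const_mul _
  constructor
  · rw [hfun]
    exact integrable_finset_sum _ (fun i _ => hint i)
  · rw [hfun]
    rw [MeasureTheory.integral_finset_sum _ (fun i _ => hint i)]
    rw [Qr_matFun, Finset.sum_mul]
    congr 1
    funext i
    rw [MeasureTheory.integral_const_mul, lam_integral hσ0 hσ1 (hMp.eigenvalues_nonneg i)]
    ring

/-- pointwise comparison of the integrands -/
lemma qr_frac_comb {C D : Matrix (Fin n) (Fin n) ℂ} (hC : C.PosSemidef)
    (hD : D.PosSemidef) {a : ℝ} (ha : 0 ≤ a) (ha1 : a ≤ 1) {s : ℝ} (hs : 0 < s)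
    (hW : (a • C + (1-a) • D).IsHermitian) (v : Fin n → ℂ) :
    a * Qr (matFun C hC.1 (fun x => x/(x+s))) v
      + (1-a) * Qr (matFun D hD.1 (fun x => x/(x+s))) v
      ≤ Qr (matFun (a • C + (1-a) • D) hW (fun x => x/(x+s))) v := by
  have hWpsd : (a • C + (1-a) • D).PosSemidef := posSemidef_comb hC hD ha (by linarith) hW
  have key : ∀ (M : Matrix (Fin n) (Fin n) ℂ) (hM : M.IsHermitian) (hMp : M.PosSemidef),
      Qr (matFun M hM (fun x => x/(x+s))) v =
        Qr (1 : Matrix (Fin n) (Fin n) ℂ) v - s * Qr (matFun M hM (fun x => (x+s)⁻¹)) v := by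
    intro M hM hMp
    have e : matFun M hM (fun x => x/(x+s)) =
        (1:ℝ) • matFun M hM (fun _ => 1) + (-s) • matFun M hM (fun x => (x+s)⁻¹) := by
      rw [← matFun_smul_add]
      apply matFun_congr
      intro i
      have h0 := hMp.eigenvalues_nonneg i
      have hne : hM.eigenvalues i + s ≠ 0 := by positivity
      field_simp
      ring
    rw [e, Qr_comb, matFun_one]
    ring
  rw [key C hC.1 hC, key D hD.1 hD, key _ hW hWpsd]
  have hres := qr_resolvent_comb hC hD ha ha1 hs hW v
  have hq1 : a * Qr (1 : Matrix (Fin n) (Fin n) ℂ) v + (1-a) * Qr 1 v = Qr 1 v := by ring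
  nlinarith [hres, hs]

/-- concavity of the power quadratic form -/
lemma qr_pow_concave {C D : Matrix (Fin n) (Fin n) ℂ} (hC : C.PosSemidef)
    (hD : D.PosSemidef) {a : ℝ} (ha : 0 ≤ a) (ha1 : a ≤ 1) {σ : ℝ} (hσ0 : 0 < σ) (hσ1 : σ < 1)
    (hW : (a • C + (1-a) • D).IsHermitian) (v : Fin n → ℂ) :
    a * Qr (matFun C hC.1 (fun x => x ^ σ)) v + (1-a) * Qr (matFun D hD.1 (fun x => x ^ σ)) v
      ≤ Qr (matFun (a • C + (1-a) • D) hW (fun x => x ^ σ)) v := by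
  have hWpsd : (a • C + (1-a) • D).PosSemidef := posSemidef_comb hC hD ha (by linarith) hW
  obtain ⟨hCint, hCeq⟩ := qr_pow_rep hσ0 hσ1 hC.1 hC v
  obtain ⟨hDint, hDeq⟩ := qr_pow_rep hσ0 hσ1 hD.1 hD v
  obtain ⟨hWint, hWeq⟩ := qr_pow_rep hσ0 hσ1 hW hWpsd v
  have hcomb : (a * Qr (matFun C hC.1 (fun x => x ^ σ)) v
      + (1-a) * Qr (matFun D hD.1 (fun x => x ^ σ)) v) * Iconst σ
      ≤ Qr (matFun (a • C + (1-a) • D) hW (fun x => x ^ σ)) v * Iconst σ := by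
    rw [← hWeq]
    have lhs_eq : (a * Qr (matFun C hC.1 (fun x => x ^ σ)) v
        + (1-a) * Qr (matFun D hD.1 (fun x => x ^ σ)) v) * Iconst σ
        = ∫ s in Ioi (0:ℝ), (a * (s ^ (σ-1) * Qr (matFun C hC.1 (fun x => x/(x+s))) v)
            + (1-a) * (s ^ (σ-1) * Qr (matFun D hD.1 (fun x => x/(x+s))) v)) := by
      rw [MeasureTheory.integral_add (hCint.const_mul a) (hDint.const_mul (1-a)),
        MeasureTheory.integral_const_mul, MeasureTheory.integral_const_mul, hCeq, hDeq]
      ring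
    rw [lhs_eq]
    refine setIntegral_mono_on ((hCint.const_mul a).add (hDint.const_mul (1-a)))
      hWint measurableSet_Ioi (fun s hs => ?_)
    have hs0 : (0:ℝ) < s := hs
    have hpt := qr_frac_comb hC hD ha ha1 hs0 hW v
    have hnn : (0:ℝ) ≤ s ^ (σ-1) := Real.rpow_nonneg hs0.le _
    calc a * (s ^ (σ-1) * Qr (matFun C hC.1 (fun x => x/(x+s))) v)
          + (1-a) * (s ^ (σ-1) * Qr (matFun D hD.1 (fun x => x/(x+s))) v)
        = s ^ (σ-1) * (a * Qr (matFun C hC.1 (fun x => x/(x+s))) v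
            + (1-a) * Qr (matFun D hD.1 (fun x => x/(x+s))) v) := by ring
      _ ≤ s ^ (σ-1) * Qr (matFun (a • C + (1-a) • D) hW (fun x => x/(x+s))) v :=
          mul_le_mul_of_nonneg_left hpt hnn
  exact le_of_mul_le_mul_right hcomb (Iconst_pos hσ0 hσ1)



/-- i-th eigenvector column of a Hermitian matrix -/
noncomputable def col {A : Matrix (Fin n) (Fin n) ℂ} (hA : A.IsHermitian) (i : Fin n) :
    Fin n → ℂ :=
  (hA.eigenvectorUnitary : Matrix (Fin n) (Fin n) ℂ).mulVec (Pi.single i 1)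

lemma wvec_col {A : Matrix (Fin n) (Fin n) ℂ} (hA : A.IsHermitian) (i : Fin n) :
    wvec hA (col hA i) = Pi.single i 1 := by
  unfold wvec col
  rw [Matrix.mulVec_mulVec, star_mul_self_U hA, Matrix.one_mulVec]

lemma normSq_single (i j : Fin n) :
    Complex.normSq ((Pi.single i 1 : Fin n → ℂ) j) = if j = i then 1 else 0 := by
  by_cases h : j = i
  · subst h; simp
  · rw [Pi.single_apply]
    simp [h]

lemma Qr_matFun_col {A : Matrix (Fin n) (Fin n) ℂ} (hA : A.IsHermitian) (g : ℝ → ℝ)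
    (i : Fin n) : Qr (matFun A hA g) (col hA i) = g (hA.eigenvalues i) := by
  rw [Qr_matFun, wvec_col]
  rw [Fintype.sum_eq_single i]
  · rw [normSq_single]; simp
  · intro j hj
    rw [normSq_single]
    simp [hj]

lemma Qr_col_self {A : Matrix (Fin n) (Fin n) ℂ} (hA : A.IsHermitian) (i : Fin n) :
    Qr A (col hA i) = hA.eigenvalues i := by
  have h := Qr_matFun_col hA (fun x => x) i
  rw [matFun_id] at h
  exact h

lemma col_normSq_sum {A : Matrix (Fin n) (Fin n) ℂ} (hA : A.IsHermitian) (i : Fin n) :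
    ∑ j, Complex.normSq (col hA i j) = 1 := by
  have := wvec_normSq_sum hA (col hA i)
  rw [wvec_col] at this
  rw [← this]
  rw [Fintype.sum_eq_single i]
  · rw [normSq_single]; simp
  · intro j hj
    rw [normSq_single]
    simp [hj]

/-- dot product against a column as a matrix entry -/
lemma dot_col {A : Matrix (Fin n) (Fin n) ℂ} (hA : A.IsHermitian)
    (N : Matrix (Fin n) (Fin n) ℂ) (i : Fin n) :
    dotProduct (star (col hA i)) (N.mulVec (col hA i))
      = (star (hA.eigenvectorUnitary : Matrix (Fin n) (Fin n) ℂ) * N *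
          (hA.eigenvectorUnitary : Matrix (Fin n) (Fin n) ℂ)) i i := by
  set U := (hA.eigenvectorUnitary : Matrix (Fin n) (Fin n) ℂ)
  have lhs_eq : dotProduct (star (col hA i)) (N.mulVec (col hA i))
      = ∑ j, ∑ k, (starRingEnd ℂ) (U j i) * (N j k * U k i) := by
    unfold col
    rw [Matrix.mulVec_single_one]
    unfold dotProduct Matrix.mulVec dotProduct
    congr 1
    funext j
    simp only [Pi.star_apply, mul_one, Complex.star_def, Finset.mul_sum, Matrix.col_apply]
    rfl
  rw [lhs_eq, Matrix.mul_apply]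
  have hUN : ∀ j, (star U * N) i j = ∑ k, (starRingEnd ℂ) (U k i) * N k j := by
    intro j
    rw [Matrix.mul_apply]
    simp [Matrix.star_apply]
  simp only [hUN, Finset.sum_mul]
  rw [Finset.sum_comm]
  congr 1
  funext j
  congr 1
  funext k
  ring

/-- trace of `K * N` as an eigenvalue-weighted sum of quadratic forms of `N` -/
lemma trace_mul_decomp {K : Matrix (Fin n) (Fin n) ℂ} (hK : K.IsHermitian)
    (N : Matrix (Fin n) (Fin n) ℂ) :
    (Matrix.trace (K * N)).re = ∑ i, hK.eigenvalues i * Qr N (col hK i) := by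
  set U := (hK.eigenvectorUnitary : Matrix (Fin n) (Fin n) ℂ)
  have hKdec : K = U * Matrix.diagonal (RCLike.ofReal ∘ hK.eigenvalues) * star U :=
    hK.spectral_theorem
  have h1 : Matrix.trace (K * N) = Matrix.trace (Matrix.diagonal (RCLike.ofReal ∘ hK.eigenvalues)
      * (star U * N * U)) := by
    conv_lhs => rw [hKdec]
    rw [show U * Matrix.diagonal (RCLike.ofReal ∘ hK.eigenvalues) * star U * N
        = U * (Matrix.diagonal (RCLike.ofReal ∘ hK.eigenvalues) * (star U * N)) by
      simp only [Matrix.mul_assoc]]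
    rw [Matrix.trace_mul_comm]
    simp only [Matrix.mul_assoc]
  rw [h1]
  have h2 : Matrix.trace (Matrix.diagonal (RCLike.ofReal ∘ hK.eigenvalues) * (star U * N * U))
      = ∑ i, (hK.eigenvalues i : ℂ) * (star U * N * U) i i := by
    rw [Matrix.trace]
    congr 1
    funext i
    rw [Matrix.diag_apply, Matrix.mul_apply]
    rw [Fintype.sum_eq_single i]
    · rw [Matrix.diagonal_apply_eq]
      rfl
    · intro j hj
      rw [Matrix.diagonal_apply_ne _ (Ne.symm hj)]
      exact zero_mul _
  rw [h2]
  rw [Complex.re_sum]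
  congr 1
  funext i
  rw [← dot_col hK N i]
  unfold Qr
  rw [show ((hK.eigenvalues i : ℝ) : ℂ) * (star (col hK i) ⬝ᵥ N *ᵥ col hK i)
      = Complex.ofReal (hK.eigenvalues i) * (star (col hK i) ⬝ᵥ N *ᵥ col hK i) from rfl]
  rw [Complex.mul_re, Complex.ofReal_re, Complex.ofReal_im]
  ring

/-- spectral Jensen inequality for quadratic forms -/
lemma jensen_q {M : Matrix (Fin n) (Fin n) ℂ} (hM : M.IsHermitian)
    {f : ℝ → ℝ} (hf : ConvexOn ℝ (Ici 0) f) (hev : ∀ i, 0 ≤ hM.eigenvalues i)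
    (v : Fin n → ℂ) (hv : ∑ i, Complex.normSq (v i) = 1) :
    f (Qr M v) ≤ Qr (matFun M hM f) v := by
  have hw : ∑ i, Complex.normSq (wvec hM v i) = 1 := by
    rw [wvec_normSq_sum hM v, hv]
  have hQ : Qr M v = ∑ i, Complex.normSq (wvec hM v i) * hM.eigenvalues i := by
    conv_lhs => rw [← matFun_id hM]
    rw [Qr_matFun]
    congr 1
    funext i
    ring
  rw [hQ, Qr_matFun]
  have := hf.map_sum_le (t := Finset.univ)
    (w := fun i => Complex.normSq (wvec hM v i)) (p := fun i => hM.eigenvalues i)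
    (fun i _ => Complex.normSq_nonneg _) hw (fun i _ => hev i)
  simp only [smul_eq_mul] at this
  calc f (∑ i, Complex.normSq (wvec hM v i) * hM.eigenvalues i)
      ≤ ∑ i, Complex.normSq (wvec hM v i) * f (hM.eigenvalues i) := this
    _ = ∑ i, f (hM.eigenvalues i) * Complex.normSq (wvec hM v i) := by
        congr 1; funext i; ring

/-- weighted trace Jensen inequality -/
lemma trace_jensen {X Y : Matrix (Fin n) (Fin n) ℂ} (hX : X.PosSemidef) (hY : Y.PosSemidef)
    {a : ℝ} (ha : 0 ≤ a) (ha1 : a ≤ 1) (hW : (a • X + (1-a) • Y).IsHermitian)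
    {f : ℝ → ℝ} (hf : ConvexOn ℝ (Ici 0) f) :
    (Matrix.trace (matFun (a • X + (1-a) • Y) hW f)).re ≤
      a * (Matrix.trace (matFun X hX.1 f)).re + (1-a) * (Matrix.trace (matFun Y hY.1 f)).re := by
  have htr : ∀ (M : Matrix (Fin n) (Fin n) ℂ) (hM : M.IsHermitian) (g : ℝ → ℝ),
      (Matrix.trace (matFun M hM g)).re = ∑ i, g (hM.eigenvalues i) := by
    intro M hM g
    rw [trace_matFun, Complex.re_sum]
    simp
  rw [htr _ hW f]
  -- trace of N against the eigencolumns of W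
  have hsum : ∀ N : Matrix (Fin n) (Fin n) ℂ, ∑ i, Qr N (col hW i) = (Matrix.trace N).re := by
    intro N
    have : ∀ i, Qr N (col hW i)
        = ((star (hW.eigenvectorUnitary : Matrix (Fin n) (Fin n) ℂ) * N *
            (hW.eigenvectorUnitary : Matrix (Fin n) (Fin n) ℂ)) i i).re := by
      intro i
      unfold Qr
      rw [dot_col]
    simp only [this]
    rw [← Complex.re_sum]
    rw [show (∑ i, (star (hW.eigenvectorUnitary : Matrix (Fin n) (Fin n) ℂ) * N *
        (hW.eigenvectorUnitary : Matrix (Fin n) (Fin n) ℂ)) i i)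
        = Matrix.trace (star (hW.eigenvectorUnitary : Matrix (Fin n) (Fin n) ℂ) * N *
          (hW.eigenvectorUnitary : Matrix (Fin n) (Fin n) ℂ)) from rfl]
    rw [Matrix.trace_mul_cycle, mul_self_star_U hW, Matrix.one_mul]
  have step : ∀ i, f (hW.eigenvalues i) ≤
      a * Qr (matFun X hX.1 f) (col hW i) + (1-a) * Qr (matFun Y hY.1 f) (col hW i) := by
    intro i
    have hval : hW.eigenvalues i = a * Qr X (col hW i) + (1-a) * Qr Y (col hW i) := by
      rw [← Qr_comb, Qr_col_self]
    have hXm : Qr X (col hW i) ∈ Ici (0:ℝ) := Qr_nonneg_of_posSemidef hX _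
    have hYm : Qr Y (col hW i) ∈ Ici (0:ℝ) := Qr_nonneg_of_posSemidef hY _
    have hconv := hf.2 hXm hYm ha (by linarith : (0:ℝ) ≤ 1-a) (by ring : a + (1-a) = 1)
    simp only [smul_eq_mul] at hconv
    have hJX : f (Qr X (col hW i)) ≤ Qr (matFun X hX.1 f) (col hW i) :=
      jensen_q hX.1 hf (fun j => hX.eigenvalues_nonneg j) _ (col_normSq_sum hW i)
    have hJY : f (Qr Y (col hW i)) ≤ Qr (matFun Y hY.1 f) (col hW i) :=
      jensen_q hY.1 hf (fun j => hY.eigenvalues_nonneg j) _ (col_normSq_sum hW i)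
    calc f (hW.eigenvalues i) = f (a * Qr X (col hW i) + (1-a) * Qr Y (col hW i)) := by
          rw [← hval]
      _ ≤ a * f (Qr X (col hW i)) + (1-a) * f (Qr Y (col hW i)) := hconv
      _ ≤ a * Qr (matFun X hX.1 f) (col hW i) + (1-a) * Qr (matFun Y hY.1 f) (col hW i) := by
          have := mul_le_mul_of_nonneg_left hJX ha
          have := mul_le_mul_of_nonneg_left hJY (by linarith : (0:ℝ) ≤ 1-a)
          linarith
  calc ∑ i, f (hW.eigenvalues i)
      ≤ ∑ i, (a * Qr (matFun X hX.1 f) (col hW i) + (1-a) * Qr (matFun Y hY.1 f) (col hW i)) :=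
        Finset.sum_le_sum (fun i _ => step i)
    _ = a * ∑ i, Qr (matFun X hX.1 f) (col hW i)
        + (1-a) * ∑ i, Qr (matFun Y hY.1 f) (col hW i) := by
        rw [Finset.sum_add_distrib, Finset.mul_sum, Finset.mul_sum]
    _ = a * (Matrix.trace (matFun X hX.1 f)).re + (1-a) * (Matrix.trace (matFun Y hY.1 f)).re := by
        rw [hsum, hsum]


lemma convexOn_congr {s : Set ℝ} {f g : ℝ → ℝ} (hg : ConvexOn ℝ s g)
    (h : ∀ x ∈ s, f x = g x) : ConvexOn ℝ s f := by
  refine ⟨hg.1, fun x hx y hy a b ha hb hab => ?_⟩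
  rw [h _ hx, h _ hy, h _ (hg.1 hx hy ha hb hab)]
  exact hg.2 hx hy ha hb hab

lemma psd_trace_re_nonneg {M : Matrix (Fin n) (Fin n) ℂ} (h : M.PosSemidef) :
    0 ≤ (Matrix.trace M).re := by
  rw [Matrix.trace, Complex.re_sum]
  refine Finset.sum_nonneg fun i _ => ?_
  have hdiag : M.diag i = dotProduct (star (Pi.single i 1 : Fin n → ℂ))
      (M.mulVec (Pi.single i 1)) := by
    rw [Matrix.diag_apply]
    unfold dotProduct
    rw [Fintype.sum_eq_single i]
    · rw [Pi.star_apply, Pi.single_eq_same, star_one, one_mul]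
      unfold Matrix.mulVec dotProduct
      rw [Fintype.sum_eq_single i]
      · rw [Pi.single_eq_same, mul_one]
      · intro j hj
        rw [Pi.single_eq_of_ne hj, mul_zero]
    · intro j hj
      rw [Pi.star_apply, Pi.single_eq_of_ne hj, star_zero, zero_mul]
  rw [hdiag]
  exact h.re_dotProduct_nonneg _

lemma trace_sq_re_nonneg {H : Matrix (Fin n) (Fin n) ℂ} (hH : H.IsHermitian) :
    0 ≤ (Matrix.trace (H * H)).re := by
  have h : H * H = Hᴴ * H := by rw [hH]
  rw [h]
  exact psd_trace_re_nonneg (Matrix.posSemidef_conjTranspose_mul_self H)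

lemma trace_sub_sq (P Q : Matrix (Fin n) (Fin n) ℂ) :
    (Matrix.trace ((P - Q) * (P - Q))).re = (Matrix.trace (P*P)).re
      - 2 * (Matrix.trace (P*Q)).re + (Matrix.trace (Q*Q)).re := by
  have hQP : (Matrix.trace (Q*P)).re = (Matrix.trace (P*Q)).re := by
    rw [Matrix.trace_mul_comm]
  rw [Matrix.sub_mul, Matrix.mul_sub, Matrix.mul_sub, Matrix.trace_sub, Matrix.trace_sub,
    Matrix.trace_sub]
  simp only [Complex.sub_re, Complex.add_re]
  rw [hQP]
  ring

end MF

theorem stmt5 {n : ℕ} (A B : Matrix (Fin n) (Fin n) ℂ)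
    (hA : A.PosDef) (hB : B.PosDef) (p t : ℝ)
    (hp : p ∈ Set.Icc (1:ℝ) 2) (ht : t ∈ Set.Icc (0:ℝ) 1)
    (hM : (t • mpow A hA.1 p + (1 - t) • mpow B hB.1 p).IsHermitian) :
    (Matrix.trace ((A - mpow _ hM (1/p)) * (A - mpow _ hM (1/p)))).re ≤
      (Matrix.trace ((A - B) * (A - B))).re := by
  classical
  open MF in
  have hp0 : 0 < p := lt_of_lt_of_le one_pos hp.1
  have hJ : 0 ≤ (Matrix.trace ((A - B) * (A - B))).re :=
    MF.trace_sq_re_nonneg (hA.1.sub hB.1)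
  -- abbreviations
  set X := mpow A hA.1 p with hXdef
  set Y := mpow B hB.1 p with hYdef
  have hXp : X.PosSemidef := MF.matFun_posSemidef hA.1 _
    (fun i => Real.rpow_nonneg (hA.eigenvalues_pos i).le p)
  have hYp : Y.PosSemidef := MF.matFun_posSemidef hB.1 _
    (fun i => Real.rpow_nonneg (hB.eigenvalues_pos i).le p)
  set σ : ℝ := 1/p with hσdef
  have hμeq : mpow (t • X + (1-t) • Y) hM (1/p)
      = matFun (t • X + (1-t) • Y) hM (fun x => x ^ σ) := rfl
  -- identities
  have hIdA : matFun X hXp.1 (fun x => x ^ σ) = A := by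
    have h1 : matFun X hXp.1 (fun x => x ^ σ)
        = matFun A hA.1 (fun x => (x ^ p) ^ σ) :=
      MF.matFun_matFun hA.1 (fun x => x ^ p) (fun x => x ^ σ) hXp.1
    rw [h1, MF.matFun_congr hA.1 (h := fun x => x)
      (fun i => by
        rw [← Real.rpow_mul (hA.eigenvalues_pos i).le, mul_one_div_cancel hp0.ne',
          Real.rpow_one]), MF.matFun_id]
  have hIdB : matFun Y hYp.1 (fun x => x ^ σ) = B := by
    have h1 : matFun Y hYp.1 (fun x => x ^ σ)
        = matFun B hB.1 (fun x => (x ^ p) ^ σ) :=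
      MF.matFun_matFun hB.1 (fun x => x ^ p) (fun x => x ^ σ) hYp.1
    rw [h1, MF.matFun_congr hB.1 (h := fun x => x)
      (fun i => by
        rw [← Real.rpow_mul (hB.eigenvalues_pos i).le, mul_one_div_cancel hp0.ne',
          Real.rpow_one]), MF.matFun_id]
  -- square of the mean
  set f : ℝ → ℝ := fun x => x ^ σ * x ^ σ with hfdef
  have hμ2 : matFun (t • X + (1-t) • Y) hM (fun x => x ^ σ)
      * matFun (t • X + (1-t) • Y) hM (fun x => x ^ σ)
      = matFun (t • X + (1-t) • Y) hM f := MF.matFun_mul hM _ _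
  have hXf : matFun X hXp.1 f = A * A := by
    have h1 : matFun X hXp.1 f = matFun A hA.1 (fun x => f (x ^ p)) :=
      MF.matFun_matFun hA.1 (fun x => x ^ p) f hXp.1
    have h2 : matFun A hA.1 (fun x => f (x ^ p)) = matFun A hA.1 (fun x => x * x) :=
      MF.matFun_congr hA.1 (fun i => by
        rw [hfdef]
        simp only
        rw [← Real.rpow_mul (hA.eigenvalues_pos i).le, mul_one_div_cancel hp0.ne',
          Real.rpow_one])
    rw [h1, h2, ← MF.matFun_mul hA.1 (fun x => x) (fun x => x), MF.matFun_id]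
  have hYf : matFun Y hYp.1 f = B * B := by
    have h1 : matFun Y hYp.1 f = matFun B hB.1 (fun x => f (x ^ p)) :=
      MF.matFun_matFun hB.1 (fun x => x ^ p) f hYp.1
    have h2 : matFun B hB.1 (fun x => f (x ^ p)) = matFun B hB.1 (fun x => x * x) :=
      MF.matFun_congr hB.1 (fun i => by
        rw [hfdef]
        simp only
        rw [← Real.rpow_mul (hB.eigenvalues_pos i).le, mul_one_div_cancel hp0.ne',
          Real.rpow_one])
    rw [h1, h2, ← MF.matFun_mul hB.1 (fun x => x) (fun x => x), MF.matFun_id]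
  have hσ0 : 0 < σ := by rw [hσdef]; positivity
  -- convexity of f on [0,∞)
  have hconv : ConvexOn ℝ (Set.Ici 0) f := by
    refine MF.convexOn_congr (convexOn_rpow (p := 2*σ) ?_) (fun x hx => ?_)
    · rw [hσdef, show 2 * (1/p) = 2/p by ring, le_div_iff₀ hp0]
      linarith [hp.2]
    · rcases eq_or_lt_of_le (Set.mem_Ici.mp hx : (0:ℝ) ≤ x) with h | h
      · rw [← h, hfdef]
        simp only
        rw [Real.zero_rpow hσ0.ne', Real.zero_rpow (by positivity : (2*σ) ≠ 0), mul_zero]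
      · rw [hfdef]
        simp only
        rw [← Real.rpow_add h]
        congr 1
        ring
  -- trace Jensen for the square term
  have hI : (Matrix.trace (matFun (t • X + (1-t) • Y) hM f)).re ≤
      t * (Matrix.trace (A * A)).re + (1-t) * (Matrix.trace (B * B)).re := by
    have := MF.trace_jensen hXp hYp ht.1 ht.2 hM hconv
    rw [hXf, hYf] at this
    exact this
  -- concavity for the cross term
  have hII : t * (Matrix.trace (A * A)).re + (1-t) * (Matrix.trace (A * B)).re ≤
      (Matrix.trace (A * matFun (t • X + (1-t) • Y) hM (fun x => x ^ σ))).re := by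
    rcases eq_or_lt_of_le hp.1 with hp1 | hp1
    · -- p = 1 : the mean is linear, equality holds
      have hσ1 : σ = 1 := by rw [hσdef, ← hp1]; norm_num
      have hXA : X = A := by
        rw [hXdef, ← hp1]
        show matFun A hA.1 (fun x => x ^ (1:ℝ)) = A
        rw [MF.matFun_congr hA.1 (h := fun x => x) (fun i => Real.rpow_one _), MF.matFun_id]
      have hYB : Y = B := by
        rw [hYdef, ← hp1]
        show matFun B hB.1 (fun x => x ^ (1:ℝ)) = B
        rw [MF.matFun_congr hB.1 (h := fun x => x) (fun i => Real.rpow_one _), MF.matFun_id]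
      have hμM : matFun (t • X + (1-t) • Y) hM (fun x => x ^ σ) = t • X + (1-t) • Y := by
        rw [hσ1]
        rw [MF.matFun_congr hM (h := fun x => x) (fun i => Real.rpow_one _), MF.matFun_id]
      rw [hμM, hXA, hYB]
      rw [Matrix.mul_add, Matrix.trace_add, Matrix.mul_smul, Matrix.mul_smul,
        Matrix.trace_smul, Matrix.trace_smul, Complex.add_re]
      rw [Complex.real_smul, Complex.real_smul, Complex.mul_re, Complex.mul_re]
      simp only [Complex.ofReal_re, Complex.ofReal_im]
      ring_nf
      nlinarith [le_refl (0:ℝ)]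
    · -- p > 1 : genuine concavity
      have hσ1 : σ < 1 := by
        rw [hσdef, div_lt_one hp0]
        exact hp1
      have hdec := MF.trace_mul_decomp hA.1 (matFun (t • X + (1-t) • Y) hM (fun x => x ^ σ))
      rw [hdec]
      have hdecA := MF.trace_mul_decomp hA.1 A
      have hdecB := MF.trace_mul_decomp hA.1 B
      have hcc : ∀ i, t * Qr A (MF.col hA.1 i) + (1-t) * Qr B (MF.col hA.1 i)
          ≤ Qr (matFun (t • X + (1-t) • Y) hM (fun x => x ^ σ)) (MF.col hA.1 i) := by
        intro i
        have h := MF.qr_pow_concave hXp hYp ht.1 ht.2 hσ0 hσ1 hM (MF.col hA.1 i)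
        rw [hIdA, hIdB] at h
        exact h
      calc t * (Matrix.trace (A * A)).re + (1-t) * (Matrix.trace (A * B)).re
          = ∑ i, hA.1.eigenvalues i * (t * Qr A (MF.col hA.1 i)
              + (1-t) * Qr B (MF.col hA.1 i)) := by
            rw [hdecA, hdecB, Finset.mul_sum, Finset.mul_sum, ← Finset.sum_add_distrib]
            congr 1
            funext i
            ring
        _ ≤ ∑ i, hA.1.eigenvalues i *
              Qr (matFun (t • X + (1-t) • Y) hM (fun x => x ^ σ)) (MF.col hA.1 i) :=
            Finset.sum_le_sum (fun i _ =>
              mul_le_mul_of_nonneg_left (hcc i) (hA.eigenvalues_pos i).le)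
  -- final assembly
  rw [hμeq, MF.trace_sub_sq A _, MF.trace_sub_sq A B, hμ2]
  have hJ' : 0 ≤ (Matrix.trace (A*A)).re - 2 * (Matrix.trace (A*B)).re
      + (Matrix.trace (B*B)).re := by
    rw [← MF.trace_sub_sq]
    exact hJ
  have hprod := mul_nonneg ht.1 hJ'
  nlinarith [hI, hII, hprod]
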